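/- Let ν > 0, η ∈ ℝ, let G_x be an n×n and G_y an m×m Hermitian positive semidefinite complex matrix, and set A_x = -(ν+iη)G_x, A_y = -(ν+iη)G_y. Then for every t > 0 and every complex n×m matrix Z, ‖exp(tA_x) · (A_x Z + Z A_y) · exp(tA_y)‖_F ≤ (√(ν² + η²) / (ν e t)) · ‖Z‖_F, where e is Euler's number. -/

import Mathlib

open scoped BigOperators ComplexOrder Matrix

lemma frobSq_eq_trace {n m : ℕ} (A : Matrix (Fin n) (Fin m) ℂ) :
    (∑ i, ∑ j, ‖A i j‖ ^ 2) = (Matrix.trace (Aᴴ * A)).re := by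
  rw [Matrix.trace]
  simp only [Matrix.diag_apply, Matrix.mul_apply, Matrix.conjTranspose_apply]
  rw [Complex.re_sum, Finset.sum_comm]
  refine Finset.sum_congr rfl fun i _ => ?_
  rw [Complex.re_sum]
  refine Finset.sum_congr rfl fun j _ => ?_
  rw [Complex.sq_norm]
  simp [Complex.normSq_apply, Complex.mul_re]

lemma frob_conj {n m : ℕ} (P : Matrix (Fin n) (Fin n) ℂ) (V : Matrix (Fin m) (Fin m) ℂ)
    (hP : Pᴴ * P = 1) (hV : V * Vᴴ = 1) (M : Matrix (Fin n) (Fin m) ℂ) :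
    (∑ i, ∑ j, ‖(P * M * V) i j‖ ^ 2) = ∑ i, ∑ j, ‖M i j‖ ^ 2 := by
  rw [frobSq_eq_trace, frobSq_eq_trace]
  have h1 : (P * M * V)ᴴ * (P * M * V) = Vᴴ * (Mᴴ * M) * V := by
    simp only [Matrix.conjTranspose_mul]
    calc Vᴴ * (Mᴴ * Pᴴ) * (P * M * V) = Vᴴ * (Mᴴ * ((Pᴴ * P) * M)) * V := by
          simp only [Matrix.mul_assoc]
      _ = Vᴴ * (Mᴴ * M) * V := by rw [hP, Matrix.one_mul]
  rw [h1, Matrix.trace_mul_cycle, ← Matrix.mul_assoc, hV, Matrix.one_mul]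

lemma xexp_le {a x : ℝ} (ha : 0 < a) (hx : 0 ≤ x) :
    x * Real.exp (-(a * x)) ≤ 1 / (a * Real.exp 1) := by
  have h := Real.add_one_le_exp (a * x - 1)
  have h2 : a * x * Real.exp (-(a * x)) ≤ Real.exp (-1) := by
    have := mul_le_mul_of_nonneg_right (by linarith : a * x ≤ Real.exp (a * x - 1))
      (Real.exp_pos (-(a * x))).le
    rwa [← Real.exp_add, show a * x - 1 + -(a * x) = -1 by ring] at this
  have hxe : x * Real.exp (-(a * x)) = (a * x * Real.exp (-(a * x))) / a := by
    field_simp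
  rw [hxe]
  rw [div_le_div_iff₀ ha (by positivity)]
  calc a * x * Real.exp (-(a * x)) * (a * Real.exp 1)
      ≤ Real.exp (-1) * (a * Real.exp 1) :=
        mul_le_mul_of_nonneg_right h2 (by positivity)
    _ = 1 * a := by rw [Real.exp_neg]; field_simp

lemma exp_smul_herm {k : ℕ} {G : Matrix (Fin k) (Fin k) ℂ} (hG : G.IsHermitian) (z : ℂ) :
    NormedSpace.exp (z • G) =
      (hG.eigenvectorUnitary : Matrix (Fin k) (Fin k) ℂ) *
        Matrix.diagonal (fun i => Complex.exp (z * hG.eigenvalues i)) *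
        star (hG.eigenvectorUnitary : Matrix (Fin k) (Fin k) ℂ) := by
  set U : Matrix (Fin k) (Fin k) ℂ := (hG.eigenvectorUnitary : Matrix (Fin k) (Fin k) ℂ) with hU
  have hUm := (hG.eigenvectorUnitary).2
  have hUu : star U * U = 1 := (Matrix.mem_unitaryGroup_iff'.mp hUm)
  have hUu' : U * star U = 1 := (Matrix.mem_unitaryGroup_iff.mp hUm)
  have hUinv : U⁻¹ = star U := Matrix.inv_eq_left_inv hUu
  have hisU : IsUnit U := ⟨⟨U, star U, hUu', hUu⟩, rfl⟩
  have hd : (Matrix.diagonal fun i => z * (hG.eigenvalues i : ℂ)) =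
      z • Matrix.diagonal (RCLike.ofReal ∘ hG.eigenvalues) := by
    rw [← Matrix.diagonal_smul]
    exact congrArg Matrix.diagonal (by funext i; simp)
  have hsm : z • G = U * Matrix.diagonal (fun i => z * hG.eigenvalues i) * U⁻¹ := by
    rw [hUinv, hd, mul_smul_comm, smul_mul_assoc]
    conv_lhs => rw [hG.spectral_theorem, Unitary.conjStarAlgAut_apply]
  have hde : (NormedSpace.exp fun i => z * (hG.eigenvalues i : ℂ)) =
      fun i => Complex.exp (z * hG.eigenvalues i) := by
    rw [Pi.exp_def]
    funext i
    exact (congrFun Complex.exp_eq_exp_ℂ _).symm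
  rw [hsm, Matrix.exp_conj U _ hisU, Matrix.exp_diagonal, hUinv, hde]

lemma mul_cancel_left' {k l : ℕ} {P Q : Matrix (Fin k) (Fin k) ℂ} (h : P * Q = 1)
    (X : Matrix (Fin k) (Fin l) ℂ) : P * (Q * X) = X := by
  rw [← Matrix.mul_assoc, h, Matrix.one_mul]

/-- Frobenius norm of a complex matrix. -/
noncomputable def frobNorm {n m : ℕ} (Z : Matrix (Fin n) (Fin m) ℂ) : ℝ :=
  Real.sqrt (∑ i, ∑ j, ‖Z i j‖ ^ 2)

lemma frob_le {n m : ℕ} {A B : Matrix (Fin n) (Fin m) ℂ} {K : ℝ} (hK : 0 ≤ K)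
    (h : ∀ i j, ‖A i j‖ ≤ K * ‖B i j‖) :
    frobNorm A ≤ K * frobNorm B := by
  unfold frobNorm
  rw [← Real.sqrt_sq hK, ← Real.sqrt_mul (sq_nonneg K)]
  apply Real.sqrt_le_sqrt
  rw [Finset.mul_sum]
  refine Finset.sum_le_sum fun i _ => ?_
  rw [Finset.mul_sum]
  refine Finset.sum_le_sum fun j _ => ?_
  rw [← mul_pow]
  exact pow_le_pow_left₀ (norm_nonneg _) (h i j) 2

theorem stmt_1 {n m : ℕ} (ν η : ℝ) (hν : 0 < ν)
    (Gx : Matrix (Fin n) (Fin n) ℂ) (Gy : Matrix (Fin m) (Fin m) ℂ)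
    (hGx : Gx.PosSemidef) (hGy : Gy.PosSemidef)
    (Ax : Matrix (Fin n) (Fin n) ℂ) (Ay : Matrix (Fin m) (Fin m) ℂ)
    (hAx : Ax = (-((ν : ℂ) + (η : ℂ) * Complex.I)) • Gx)
    (hAy : Ay = (-((ν : ℂ) + (η : ℂ) * Complex.I)) • Gy)
    (t : ℝ) (ht : 0 < t) (Z : Matrix (Fin n) (Fin m) ℂ) :
    frobNorm (NormedSpace.exp (t • Ax) * (Ax * Z + Z * Ay) * NormedSpace.exp (t • Ay)) ≤
      Real.sqrt (ν ^ 2 + η ^ 2) / (ν * Real.exp 1 * t) * frobNorm Z := by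
  set c : ℂ := -((ν : ℂ) + (η : ℂ) * Complex.I) with hc
  have hcabs : ‖c‖ = Real.sqrt (ν ^ 2 + η ^ 2) := by
    rw [hc, norm_neg, Complex.norm_def, Complex.normSq_apply]
    simp [pow_two]
  have hcre : c.re = -ν := by simp [hc]
  -- spectral data
  set U : Matrix (Fin n) (Fin n) ℂ := (hGx.1.eigenvectorUnitary : Matrix (Fin n) (Fin n) ℂ) with hU
  set V : Matrix (Fin m) (Fin m) ℂ := (hGy.1.eigenvectorUnitary : Matrix (Fin m) (Fin m) ℂ) with hV
  have hUu : star U * U = 1 := Matrix.mem_unitaryGroup_iff'.mp (hGx.1.eigenvectorUnitary).2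
  have hUu' : U * star U = 1 := Matrix.mem_unitaryGroup_iff.mp (hGx.1.eigenvectorUnitary).2
  have hVu : star V * V = 1 := Matrix.mem_unitaryGroup_iff'.mp (hGy.1.eigenvectorUnitary).2
  have hVu' : V * star V = 1 := Matrix.mem_unitaryGroup_iff.mp (hGy.1.eigenvectorUnitary).2
  set lam := hGx.1.eigenvalues with hlam
  set mu := hGy.1.eigenvalues with hmu
  set Dl : Matrix (Fin n) (Fin n) ℂ := Matrix.diagonal (RCLike.ofReal ∘ lam) with hDl
  set Dm : Matrix (Fin m) (Fin m) ℂ := Matrix.diagonal (RCLike.ofReal ∘ mu) with hDm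
  set E1 : Matrix (Fin n) (Fin n) ℂ :=
    Matrix.diagonal (fun i => Complex.exp ((t : ℂ) * c * lam i)) with hE1
  set E2 : Matrix (Fin m) (Fin m) ℂ :=
    Matrix.diagonal (fun j => Complex.exp ((t : ℂ) * c * mu j)) with hE2
  set W : Matrix (Fin n) (Fin m) ℂ := star U * Z * V with hW
  -- exponentials
  have hsmulx : t • Ax = ((t : ℂ) * c) • Gx := by
    rw [hAx]
    ext i j
    simp [Matrix.smul_apply, smul_eq_mul, Complex.real_smul]
    ring
  have hsmuly : t • Ay = ((t : ℂ) * c) • Gy := by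
    rw [hAy]
    ext i j
    simp [Matrix.smul_apply, smul_eq_mul, Complex.real_smul]
    ring
  have hexpx : NormedSpace.exp (t • Ax) = U * E1 * star U := by
    rw [hsmulx, exp_smul_herm hGx.1 ((t : ℂ) * c)]
  have hexpy : NormedSpace.exp (t • Ay) = V * E2 * star V := by
    rw [hsmuly, exp_smul_herm hGy.1 ((t : ℂ) * c)]
  have hmid : Ax * Z + Z * Ay = c • (Gx * Z + Z * Gy) := by
    rw [hAx, hAy]
    simp [Matrix.smul_mul, Matrix.mul_smul, smul_add]
  -- key identity
  have hspecx : Gx = U * Dl * star U := hGx.1.spectral_theorem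
  have hspecy : Gy = V * Dm * star V := hGy.1.spectral_theorem
  set M := NormedSpace.exp (t • Ax) * (Ax * Z + Z * Ay) * NormedSpace.exp (t • Ay) with hM
  have key : star U * M * V = c • (E1 * (Dl * W + W * Dm) * E2) := by
    rw [hM, hexpx, hexpy, hmid, hW]
    conv_lhs => rw [hspecx, hspecy]
    simp only [Matrix.mul_smul, Matrix.smul_mul, Matrix.mul_add, Matrix.add_mul,
      Matrix.mul_assoc, smul_add]
    simp only [mul_cancel_left' hUu, mul_cancel_left' hVu, hVu, Matrix.mul_one]
  -- Frobenius norm invariance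
  have hsUU : (star U)ᴴ * star U = 1 := by
    rw [← Matrix.star_eq_conjTranspose, star_star]; exact hUu'
  have hfrobM : frobNorm M = frobNorm (star U * M * V) := by
    unfold frobNorm
    rw [frob_conj (star U) V hsUU hVu' M]
  have hfrobW : frobNorm W = frobNorm Z := by
    unfold frobNorm
    rw [hW, frob_conj (star U) V hsUU hVu' Z]
  set K : ℝ := Real.sqrt (ν ^ 2 + η ^ 2) / (ν * Real.exp 1 * t) with hK
  have hKnn : 0 ≤ K := by positivity
  have hrex : ∀ r : ℝ, ((t : ℂ) * c * (r : ℂ)).re = -(ν * t * r) := by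
    intro r
    simp [hc, Complex.mul_re, Complex.mul_im]
    ring_nf
    exact Or.inl trivial
  have hbound : ∀ i j, ‖(c • (E1 * (Dl * W + W * Dm) * E2)) i j‖
      ≤ K * ‖W i j‖ := by
    intro i j
    have hln : 0 ≤ lam i := hGx.eigenvalues_nonneg i
    have hmn : 0 ≤ mu j := hGy.eigenvalues_nonneg j
    have e1 : (c • (E1 * (Dl * W + W * Dm) * E2)) i j
        = c * (Complex.exp ((t : ℂ) * c * lam i) * Complex.exp ((t : ℂ) * c * mu j))
          * (((lam i + mu j : ℝ) : ℂ) * W i j) := by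
      simp [hE1, hE2, hDl, hDm, Matrix.smul_apply, Matrix.add_apply, Matrix.mul_diagonal,
        Matrix.diagonal_mul, smul_eq_mul, Function.comp]
      push_cast
      ring
    rw [e1]
    rw [norm_mul, norm_mul, norm_mul, norm_mul, Complex.norm_exp, Complex.norm_exp,
      hrex, hrex, Complex.norm_real, Real.norm_eq_abs, abs_of_nonneg (by linarith)]
    have hxe : (lam i + mu j) * Real.exp (-(ν * t * (lam i + mu j)))
        ≤ 1 / (ν * t * Real.exp 1) := xexp_le (by positivity) (by linarith)
    calc ‖c‖ * (Real.exp (-(ν * t * lam i)) * Real.exp (-(ν * t * mu j)))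
          * ((lam i + mu j) * ‖W i j‖)
        = ‖c‖ * ((lam i + mu j) * Real.exp (-(ν * t * (lam i + mu j))))
          * ‖W i j‖ := by
          rw [← Real.exp_add]
          ring_nf
      _ ≤ ‖c‖ * (1 / (ν * t * Real.exp 1)) * ‖W i j‖ := by
          apply mul_le_mul_of_nonneg_right _ (norm_nonneg _)
          exact mul_le_mul_of_nonneg_left hxe (norm_nonneg _)
      _ = K * ‖W i j‖ := by
          rw [hcabs, hK]
          field_simp
  have hfin : frobNorm M ≤ K * frobNorm W := by
    rw [hfrobM, key]
    exact frob_le hKnn hbound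
  rw [hfrobW] at hfin
  exact hfin
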